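/- Let (A,‖·‖) be a commutative unital complex normed algebra whose norm ‖·‖ is a uniform norm, such that (A,‖·‖) is a Q-algebra and (A,‖·‖) is regular. Then every uniform norm |·| on A coincides with ‖·‖: |x| = ‖x‖ for all x ∈ A. -/

import Mathlib

/-- `x` is quasi-invertible: there is `y` with `x ∘ y = y ∘ x = 0`
where `x ∘ y = x + y - x*y`. -/
def IsQuasiInv {A : Type*} [Ring A] (x : A) : Prop :=
  ∃ y, x + y - x * y = 0 ∧ y + x - y * x = 0

/-- `S` is open in the topology induced by the norm `N`. -/
def NormOpen {A : Type*} [AddGroup A] (N : A → ℝ) (S : Set A) : Prop :=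
  ∀ x ∈ S, ∃ ε > 0, ∀ y, N (y - x) < ε → y ∈ S

/-- A uniform norm: a submultiplicative norm satisfying the square property. -/
structure IsUniformNorm {A : Type*} [Ring A] [Module ℂ A] (N : A → ℝ) : Prop where
  eq_zero_iff : ∀ x, N x = 0 ↔ x = 0
  add_le : ∀ x y, N (x + y) ≤ N x + N y
  smul_eq : ∀ (c : ℂ) (x : A), N (c • x) = ‖c‖ * N x
  mul_le : ∀ x y, N (x * y) ≤ N x * N y
  sq_eq : ∀ x, N (x * x) = N x * N x

/-- `M(A, N)`: the nonzero multiplicative linear functionals on `A` that are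
continuous (i.e. bounded) with respect to the norm `N`. -/
def MSpec {A : Type*} [Ring A] [Module ℂ A] (N : A → ℝ) : Set (A → ℂ) :=
  {f | (∀ x y, f (x + y) = f x + f y) ∧ (∀ (c : ℂ) (x : A), f (c • x) = c * f x) ∧
       (∀ x y, f (x * y) = f x * f y) ∧ f ≠ 0 ∧ (∃ C : ℝ, ∀ x, ‖f x‖ ≤ C * N x)}

/-- `(A, N)` is regular: for every subset `F` of `M(A,N)` that is closed in the
weak-* (pointwise convergence) topology and every `f₁ ∈ M(A,N) \ F` there is
`x ∈ A` vanishing on `F` with `f₁ x ≠ 0`. -/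
def RegularWrt {A : Type*} [Ring A] [Module ℂ A] (N : A → ℝ) : Prop :=
  ∀ F : Set (A → ℂ), F ⊆ MSpec N →
    IsClosed {g : ↥(MSpec N) | (g : A → ℂ) ∈ F} →
    ∀ f₁ ∈ MSpec N, f₁ ∉ F → ∃ x : A, (∀ f ∈ F, f x = 0) ∧ f₁ x ≠ 0

section Aux

open UniformSpace Filter Topology

variable {A : Type*} [CommRing A] [Algebra ℂ A]

theorem IsUniformNorm.nonneg {p : A → ℝ} (hp : IsUniformNorm p) (x : A) : 0 ≤ p x := by
  have h0 : p 0 = 0 := (hp.eq_zero_iff 0).2 rfl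
  have hneg : p (-x) = p x := by
    have h := hp.smul_eq (-1) x
    rw [neg_one_smul] at h
    simpa using h
  have h1 := hp.add_le x (-x)
  rw [add_neg_cancel, h0, hneg] at h1
  linarith

theorem IsUniformNorm.pow_le {p : A → ℝ} (hp : IsUniformNorm p) (x : A) :
    ∀ n : ℕ, p (x ^ (n + 1)) ≤ p x ^ (n + 1) := by
  intro n
  induction n with
  | zero => simp
  | succ n ih =>
    have h : x ^ (n + 2) = x ^ (n + 1) * x := by ring
    rw [h]
    calc p (x ^ (n + 1) * x) ≤ p (x ^ (n + 1)) * p x := hp.mul_le _ _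
      _ ≤ p x ^ (n + 1) * p x := mul_le_mul_of_nonneg_right ih (hp.nonneg x)
      _ = p x ^ (n + 2) := by ring

theorem IsUniformNorm.pow_two_pow {p : A → ℝ} (hp : IsUniformNorm p) (x : A) :
    ∀ k : ℕ, p (x ^ 2 ^ k) = p x ^ 2 ^ k := by
  intro k
  induction k with
  | zero => simp
  | succ k ih =>
    have h2 : x ^ 2 ^ (k + 1) = x ^ 2 ^ k * x ^ 2 ^ k := by
      rw [← pow_add]
      congr 1
      ring
    rw [h2, hp.sq_eq, ih, ← pow_add]
    congr 1
    ring

theorem char_map_zero {f : A → ℂ} (hadd : ∀ x y, f (x + y) = f x + f y) : f 0 = 0 := by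
  have h := hadd 0 0
  rw [add_zero] at h
  exact (left_eq_add.mp h)

theorem char_map_sub {f : A → ℂ} (hadd : ∀ x y, f (x + y) = f x + f y) (a b : A) :
    f (a - b) = f a - f b := by
  have hneg : f (-b) = -f b := by
    have h := hadd b (-b)
    rw [add_neg_cancel, char_map_zero hadd] at h
    linear_combination h.symm
  rw [sub_eq_add_neg, hadd, hneg, sub_eq_add_neg]

theorem char_map_pow {f : A → ℂ} (hmul : ∀ x y, f (x * y) = f x * f y) (x : A) :
    ∀ n : ℕ, f (x ^ (n + 1)) = f x ^ (n + 1) := by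
  intro n
  induction n with
  | zero => simp
  | succ n ih =>
    have h : x ^ (n + 2) = x ^ (n + 1) * x := by ring
    rw [h, hmul, ih]
    ring

/-- Every bounded character is bounded by the uniform norm with constant `1`. -/
theorem mspec_norm_le {p : A → ℝ} (hp : IsUniformNorm p) {f : A → ℂ} (hf : f ∈ MSpec p)
    (x : A) : ‖f x‖ ≤ p x := by
  obtain ⟨hadd, hsmul, hmul, hne, C₀, hC₀⟩ := hf
  set C : ℝ := max C₀ 1 with hCdef
  have hCpos : (0 : ℝ) < C := lt_of_lt_of_le one_pos (le_max_right _ _)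
  have hC : ∀ y, ‖f y‖ ≤ C * p y := fun y =>
    le_trans (hC₀ y) (mul_le_mul_of_nonneg_right (le_max_left _ _) (hp.nonneg y))
  by_contra hlt
  push_neg at hlt
  by_cases hx0 : p x = 0
  · have hx : x = 0 := (hp.eq_zero_iff x).1 hx0
    rw [hx, char_map_zero hadd, norm_zero] at hlt
    exact absurd hlt (not_lt.2 (hp.nonneg 0))
  · have ha : 0 < p x := lt_of_le_of_ne (hp.nonneg x) (Ne.symm hx0)
    have hb : 0 < ‖f x‖ := lt_trans ha hlt
    set a := p x
    set b := ‖f x‖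
    have hclaim : ∀ n : ℕ, b ^ (n + 1) ≤ C * a ^ (n + 1) := by
      intro n
      have h1 : ‖f (x ^ (n + 1))‖ = b ^ (n + 1) := by
        rw [char_map_pow hmul, norm_pow]
      calc b ^ (n + 1) = ‖f (x ^ (n + 1))‖ := h1.symm
        _ ≤ C * p (x ^ (n + 1)) := hC _
        _ ≤ C * a ^ (n + 1) := mul_le_mul_of_nonneg_left (hp.pow_le x n) hCpos.le
    have hr : 1 < b / a := (one_lt_div ha).2 hlt
    obtain ⟨n, hn⟩ := pow_unbounded_of_one_lt C hr
    have hn0 : n ≠ 0 := by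
      intro h
      rw [h, pow_zero] at hn
      exact absurd hn (not_lt.2 (le_max_right C₀ 1))
    obtain ⟨m, rfl⟩ := Nat.exists_eq_succ_of_ne_zero hn0
    have h2 : b ^ (m + 1) ≤ C * a ^ (m + 1) := hclaim m
    have h3 : (b / a) ^ (m + 1) = b ^ (m + 1) / a ^ (m + 1) := div_pow b a (m + 1)
    rw [h3] at hn
    have h5 : C * a ^ (m + 1) < b ^ (m + 1) := (lt_div_iff₀ (pow_pos ha (m + 1))).1 hn
    linarith

/-- On a Q-algebra every character is bounded. -/
theorem char_bound {N : A → ℝ} (hN : IsUniformNorm N)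
    (hQ : NormOpen N {x | IsQuasiInv x}) {f : A → ℂ}
    (hadd : ∀ x y, f (x + y) = f x + f y)
    (hsmul : ∀ (c : ℂ) (x : A), f (c • x) = c * f x)
    (hmul : ∀ x y, f (x * y) = f x * f y) :
    ∃ C : ℝ, ∀ x, ‖f x‖ ≤ C * N x := by
  have h00 : (0 : A) ∈ {x : A | IsQuasiInv x} := ⟨0, by simp, by simp⟩
  obtain ⟨ε, hε, hball⟩ := hQ 0 h00
  have step1 : ∀ x, N x < ε → f x ≠ 1 := by
    intro x hx h1
    obtain ⟨y, hy, -⟩ := hball x (by rwa [sub_zero])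
    have h := congrArg f hy
    rw [char_map_zero hadd] at h
    rw [char_map_sub hadd, hadd, hmul, h1] at h
    simp at h
  have step2 : ∀ x, N x < ε → ‖f x‖ ≤ 1 := by
    intro x hx
    by_contra h1
    push_neg at h1
    have hfx : f x ≠ 0 := by
      intro h
      rw [h, norm_zero] at h1
      linarith
    set c : ℂ := (f x)⁻¹
    have hc : ‖c‖ < 1 := by
      rw [norm_inv]
      exact inv_lt_one_of_one_lt₀ h1
    have hcx : N (c • x) < ε := by
      rw [hN.smul_eq]
      calc ‖c‖ * N x ≤ 1 * N x := mul_le_mul_of_nonneg_right hc.le (hN.nonneg x)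
        _ = N x := one_mul _
        _ < ε := hx
    exact step1 _ hcx (by rw [hsmul]; exact inv_mul_cancel₀ hfx)
  refine ⟨2 / ε, fun x => ?_⟩
  by_cases hx0 : N x = 0
  · have hx : x = 0 := (hN.eq_zero_iff x).1 hx0
    have hN0 : N (0 : A) = 0 := (hN.eq_zero_iff 0).2 rfl
    rw [hx, char_map_zero hadd, norm_zero, hN0, mul_zero]
  · have hNx : 0 < N x := lt_of_le_of_ne (hN.nonneg x) (Ne.symm hx0)
    set c : ℂ := ((ε / (2 * N x) : ℝ) : ℂ)
    have hcn : ‖c‖ = ε / (2 * N x) := by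
      rw [Complex.norm_real, Real.norm_eq_abs, abs_of_pos (by positivity)]
    have hNxne : N x ≠ 0 := ne_of_gt hNx
    have hcx : N (c • x) < ε := by
      rw [hN.smul_eq, hcn]
      have hhalf : ε / (2 * N x) * N x = ε / 2 := by
        field_simp
      rw [hhalf]
      linarith
    have h2 := step2 _ hcx
    rw [hsmul, norm_mul, hcn] at h2
    rw [div_mul_eq_mul_div, div_le_one (by positivity)] at h2
    rw [div_mul_eq_mul_div, le_div_iff₀ hε]
    calc ‖f x‖ * ε = ε * ‖f x‖ := mul_comm _ _
      _ ≤ 2 * N x := h2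

/-- Gelfand theory through the completion: on a nontrivial algebra, any uniform norm
is attained by a bounded character. -/
theorem mspec_exists [Nontrivial A] {p : A → ℝ} (hp : IsUniformNorm p) (x : A) :
    ∃ f ∈ MSpec p, ‖f x‖ = p x := by
  letI : NormedAddCommGroup A := AddGroupNorm.toNormedAddCommGroup
    { toFun := p
      map_zero' := (hp.eq_zero_iff 0).2 rfl
      add_le' := hp.add_le
      neg' := fun y => by
        have h := hp.smul_eq (-1) y
        rw [neg_one_smul] at h
        simpa using h
      eq_zero_of_map_eq_zero' := fun y h => (hp.eq_zero_iff y).1 h }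
  letI : NormedCommRing A :=
    { (inferInstance : NormedAddCommGroup A), (inferInstance : CommRing A) with
      norm_mul_le := hp.mul_le }
  letI : NormedAlgebra ℂ A :=
    { (inferInstance : Algebra ℂ A) with
      norm_smul_le := fun c y => le_of_eq (hp.smul_eq c y) }
  have hnorm : ∀ y : A, ‖y‖ = p y := fun _ => rfl
  have h1A : p (1 : A) = 1 := by
    have h := hp.sq_eq 1
    rw [one_mul] at h
    have h1 : p (1 : A) ≠ 0 := fun hc => one_ne_zero ((hp.eq_zero_iff 1).1 hc)
    have h2 : p (1 : A) * 1 = p (1 : A) * p (1 : A) := by linarith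
    exact (mul_left_cancel₀ h1 h2).symm
  letI : NormOneClass (Completion A) := by
    constructor
    rw [← UniformSpace.Completion.coe_one (α := A), UniformSpace.Completion.norm_coe, hnorm, h1A]
  haveI : Nontrivial (Completion A) := by
    refine nontrivial_of_ne 1 0 fun h => ?_
    have h2 := congrArg norm h
    rw [norm_one, norm_zero] at h2
    exact one_ne_zero h2
  set B := Completion A
  set a : B := (x : B) with ha
  have hcoe_pow : ∀ (m : ℕ), ((x ^ m : A) : B) = a ^ m := fun m =>
    map_pow (UniformSpace.Completion.coeRingHom) x m
  have hnn : ∀ k : ℕ, ‖a ^ 2 ^ k‖₊ = ‖a‖₊ ^ 2 ^ k := by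
    intro k
    have hn1 : ‖a ^ 2 ^ k‖ = ‖a‖ ^ 2 ^ k := by
      rw [← hcoe_pow, UniformSpace.Completion.norm_coe, hnorm, hp.pow_two_pow x k, ha,
        UniformSpace.Completion.norm_coe, hnorm]
    exact NNReal.coe_injective (by rw [coe_nnnorm, NNReal.coe_pow, coe_nnnorm]; exact hn1)
  have htt := spectrum.pow_nnnorm_pow_one_div_tendsto_nhds_spectralRadius a
  have hsub : Tendsto (fun k : ℕ => 2 ^ k) atTop atTop :=
    tendsto_pow_atTop_atTop_of_one_lt one_lt_two
  have hcomp := htt.comp hsub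
  have heq : (fun k : ℕ => ((‖a ^ (2 ^ k)‖₊ : ENNReal)) ^ (1 / ((2 : ℕ) ^ k : ℕ) : ℝ))
      = fun _ : ℕ => (‖a‖₊ : ENNReal) := by
    funext k
    have hm : (((2 : ℕ) ^ k : ℕ) : ℝ) ≠ 0 := Nat.cast_ne_zero.mpr (by positivity)
    rw [hnn k, ENNReal.coe_pow, ← ENNReal.rpow_natCast _ (2 ^ k), ← ENNReal.rpow_mul,
      mul_one_div]
    rw [show (((2 : ℕ) ^ k : ℕ) : ℝ) / (((2 : ℕ) ^ k : ℕ) : ℝ) = 1 from div_self hm,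
      ENNReal.rpow_one]
  rw [show ((fun n : ℕ => ((‖a ^ n‖₊ : ENNReal)) ^ (1 / (n : ℝ))) ∘ fun k : ℕ => 2 ^ k)
      = (fun k : ℕ => ((‖a ^ (2 ^ k)‖₊ : ENNReal)) ^ (1 / ((2 : ℕ) ^ k : ℕ) : ℝ)) from rfl,
    heq] at hcomp
  have hrad : spectralRadius ℂ a = (‖a‖₊ : ENNReal) :=
    tendsto_nhds_unique hcomp tendsto_const_nhds
  obtain ⟨z, hz, hznorm⟩ := spectrum.exists_nnnorm_eq_spectralRadius a
  obtain ⟨φ, hφ⟩ := WeakDual.CharacterSpace.mem_spectrum_iff_exists.mp hz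
  refine ⟨fun y : A => φ ((y : B)), ⟨?_, ?_, ?_, ?_, 1, ?_⟩, ?_⟩
  · intro y z'
    show φ (((y + z' : A) : B)) = φ ((y : B)) + φ ((z' : B))
    rw [UniformSpace.Completion.coe_add, map_add]
  · intro c y
    show φ (((c • y : A) : B)) = c * φ ((y : B))
    rw [UniformSpace.Completion.coe_smul, map_smul, smul_eq_mul]
  · intro y z'
    show φ (((y * z' : A) : B)) = φ ((y : B)) * φ ((z' : B))
    rw [UniformSpace.Completion.coe_mul, map_mul]
  · intro h
    have h1 : φ (((1 : A) : B)) = 0 := congrFun h 1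
    rw [UniformSpace.Completion.coe_one, map_one] at h1
    exact one_ne_zero h1
  · intro y
    have hmem : φ ((y : B)) ∈ spectrum ℂ ((y : B)) :=
      WeakDual.CharacterSpace.mem_spectrum_iff_exists.mpr ⟨φ, rfl⟩
    rw [one_mul]
    calc ‖φ ((y : B))‖ ≤ ‖(y : B)‖ := spectrum.norm_le_norm_of_mem hmem
      _ = p y := by rw [UniformSpace.Completion.norm_coe, hnorm]
  · have hza : ‖z‖₊ = ‖a‖₊ := by
      have := hznorm.trans hrad
      exact_mod_cast this
    have hzn : ‖z‖ = ‖a‖ := congrArg NNReal.toReal hza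
    show ‖φ a‖ = p x
    rw [hφ, hzn, ha, UniformSpace.Completion.norm_coe, hnorm]

end Aux

/-- The uniform norm on a regular uniform normed Q-algebra with unit is the only
uniform norm on it. -/
theorem uniform_norm_unique_of_regular {A : Type*} [CommRing A] [Algebra ℂ A]
    (N : A → ℝ) (hN : IsUniformNorm N)
    (hQ : NormOpen N {x | IsQuasiInv x})
    (hreg : RegularWrt N)
    (q : A → ℝ) (hq : IsUniformNorm q) :
    ∀ x, q x = N x := by
  intro x
  rcases subsingleton_or_nontrivial A with hs | hnt
  · rw [Subsingleton.elim x 0, (hq.eq_zero_iff 0).2 rfl, (hN.eq_zero_iff 0).2 rfl]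
  · have hQN : MSpec q ⊆ MSpec N := by
      rintro f ⟨hadd, hsmul, hmul, hne, -⟩
      exact ⟨hadd, hsmul, hmul, hne, char_bound hN hQ hadd hsmul hmul⟩
    have hqleN : ∀ y, q y ≤ N y := fun y => by
      obtain ⟨f, hf, hfy⟩ := mspec_exists hq y
      rw [← hfy]
      exact mspec_norm_le hN (hQN hf) y
    have hclos : MSpec N ⊆ closure (MSpec q) := by
      by_contra hc
      rw [Set.not_subset] at hc
      obtain ⟨f₁, hf₁, hf₁c⟩ := hc
      have hFclosed : IsClosed {g : ↥(MSpec N) | (g : A → ℂ) ∈ MSpec N ∩ closure (MSpec q)} := by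
        have hset : {g : ↥(MSpec N) | (g : A → ℂ) ∈ MSpec N ∩ closure (MSpec q)}
            = Subtype.val ⁻¹' closure (MSpec q) := by
          ext g
          simp [g.2]
        rw [hset]
        exact isClosed_closure.preimage continuous_subtype_val
      obtain ⟨y, hyF, hy1⟩ := hreg (MSpec N ∩ closure (MSpec q)) Set.inter_subset_left
        hFclosed f₁ hf₁ (fun h => hf₁c h.2)
      obtain ⟨f, hf, hfy⟩ := mspec_exists hq y
      have hy0 : q y = 0 := by
        rw [← hfy, hyF f ⟨hQN hf, subset_closure hf⟩, norm_zero]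
      have hy : y = 0 := (hq.eq_zero_iff y).1 hy0
      apply hy1
      rw [hy]
      exact char_map_zero hf₁.1
    have hNq : N x ≤ q x := by
      obtain ⟨f₁, hf₁, hfx⟩ := mspec_exists hN x
      have hmem := hclos hf₁
      have hS : closure (MSpec q) ⊆ {g : A → ℂ | ‖g x‖ ≤ q x} := by
        apply closure_minimal (fun g hg => mspec_norm_le hq hg x)
        exact isClosed_Iic.preimage ((continuous_apply x).norm)
      rw [← hfx]
      exact hS hmem
    exact le_antisymm (hqleN x) hNq
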